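/- Fix an integer m ≥ 1. Then C_∞^G(Δ_G^{m-1}) ⊆ C_∞^G(Δ_G^m), and the inclusion is strict: the sequence x given by x_k = exp(k^m) belongs to C_∞^G(Δ_G^m) but does not belong to C_∞^G(Δ_G^{m-1}). -/

import Mathlib

/-- Classical `m`-th order forward difference
`Δ^m y_k = ∑_{v=0}^m (−1)^v C(m,v) y_{k+v}`. -/
noncomputable def fdiff (m : ℕ) (y : ℕ → ℝ) (k : ℕ) : ℝ :=
  ∑ v ∈ Finset.range (m + 1), (-1 : ℝ) ^ v * (m.choose v : ℝ) * y (k + v)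

/-- The Cesàro mean `(1/n) ∑_{k=1}^n Δ^m (log x)_k`. -/
noncomputable def cesaro (m : ℕ) (x : ℕ → ℝ) (n : ℕ) : ℝ :=
  (1 / (n : ℝ)) * ∑ k ∈ Finset.Icc 1 n, fdiff m (fun j => Real.log (x j)) k

/-- Membership in the bigeometric Cesàro difference space `C_p^G(Δ_G^m)`. -/
def memCpG (m : ℕ) (p : ℝ) (x : ℕ → ℝ) : Prop :=
  (∀ k, 1 ≤ k → 0 < x k) ∧ Summable (fun n : ℕ => |cesaro m x n| ^ p)

/-- Membership in the bigeometric Cesàro difference space `C_∞^G(Δ_G^m)`. -/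
def memCinfG (m : ℕ) (x : ℕ → ℝ) : Prop :=
  (∀ k, 1 ≤ k → 0 < x k) ∧ ∃ C : ℝ, ∀ n : ℕ, |cesaro m x n| ≤ C

/-- `C_∞^G(Δ_G^{m-1}) ⊆ C_∞^G(Δ_G^m)` and the inclusion is strict:
`x_k = exp(k^m)` lies in `C_∞^G(Δ_G^m)` but not in `C_∞^G(Δ_G^{m-1})`. -/
lemma fdiff_succ (m : ℕ) (y : ℕ → ℝ) (k : ℕ) :
    fdiff (m+1) y k = fdiff m y k - fdiff m y (k+1) := by
  have hL : fdiff (m+1) y k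
      = (∑ v ∈ Finset.range (m+1), (-1:ℝ)^(v+1) * ((m+1).choose (v+1) : ℝ) * y (k+v+1)) + y k := by
    rw [fdiff, Finset.sum_range_succ' _ (m+1)]
    simp [add_assoc]
  have hK : fdiff m y k
      = (∑ v ∈ Finset.range m, (-1:ℝ)^(v+1) * (m.choose (v+1) : ℝ) * y (k+v+1)) + y k := by
    rw [fdiff, Finset.sum_range_succ' _ m]
    simp [add_assoc]
  have h2 : (∑ v ∈ Finset.range (m+1), (-1:ℝ)^(v+1) * (m.choose (v+1) : ℝ) * y (k+v+1))
      = ∑ v ∈ Finset.range m, (-1:ℝ)^(v+1) * (m.choose (v+1) : ℝ) * y (k+v+1) := by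
    rw [Finset.sum_range_succ]
    simp
  have h1 : (∑ v ∈ Finset.range (m+1), (-1:ℝ)^(v+1) * (m.choose v : ℝ) * y (k+v+1))
      = - fdiff m y (k+1) := by
    rw [fdiff, ← Finset.sum_neg_distrib]
    apply Finset.sum_congr rfl
    intro v _
    have : k + 1 + v = k + v + 1 := by ring
    rw [this]
    ring
  rw [hL, hK]
  have : ∀ v ∈ Finset.range (m+1),
      (-1:ℝ)^(v+1) * (((m+1).choose (v+1)) : ℝ) * y (k+v+1)
      = (-1:ℝ)^(v+1) * (m.choose (v+1) : ℝ) * y (k+v+1)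
        + (-1:ℝ)^(v+1) * (m.choose v : ℝ) * y (k+v+1) := by
    intro v _
    rw [Nat.choose_succ_succ]
    push_cast
    ring
  rw [Finset.sum_congr rfl this, Finset.sum_add_distrib, h2, h1]
  ring

lemma fdiff_shift (m : ℕ) (y : ℕ → ℝ) (k : ℕ) :
    fdiff (m+1) y k = fdiff m (fun j => y j - y (j+1)) k := by
  rw [fdiff_succ, fdiff, fdiff, fdiff, ← Finset.sum_sub_distrib]
  apply Finset.sum_congr rfl
  intro v _
  have : k + 1 + v = k + v + 1 := by ring
  rw [this]
  ring

lemma fdiff_sum {ι : Type*} (m : ℕ) (s : Finset ι) (c : ι → ℝ) (f : ι → ℕ → ℝ) (k : ℕ) :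
    fdiff m (fun j => ∑ i ∈ s, c i * f i j) k = ∑ i ∈ s, c i * fdiff m (f i) k := by
  unfold fdiff
  simp_rw [Finset.mul_sum]
  rw [Finset.sum_comm]
  apply Finset.sum_congr rfl
  intro i _
  apply Finset.sum_congr rfl
  intro v _
  ring

lemma fdiff_neg (m : ℕ) (y : ℕ → ℝ) (k : ℕ) :
    fdiff m (fun j => -(y j)) k = - fdiff m y k := by
  unfold fdiff
  rw [← Finset.sum_neg_distrib]
  apply Finset.sum_congr rfl
  intro v _
  ring

lemma fdiff_pow (m : ℕ) : ∀ d : ℕ, d ≤ m → ∀ k : ℕ,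
    fdiff m (fun j => (j:ℝ)^d) k = if d = m then (-1:ℝ)^m * (m.factorial : ℝ) else 0 := by
  induction m with
  | zero =>
    intro d hd k
    interval_cases d
    simp [fdiff]
  | succ m ih =>
    intro d hd k
    have hΔ : (fun j : ℕ => (j:ℝ)^d - ((j+1:ℕ):ℝ)^d)
        = fun j : ℕ => -(∑ i ∈ Finset.range d, ((d.choose i : ℝ)) * ((j:ℝ)^i)) := by
      funext j
      push_cast
      rw [add_pow]
      rw [Finset.sum_range_succ]
      simp
      exact Finset.sum_congr rfl (fun i _ => by ring)
    rw [fdiff_shift]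
    rw [show (fun j : ℕ => (j:ℝ)^d - ((j+1:ℕ):ℝ)^d)
        = fun j : ℕ => -(∑ i ∈ Finset.range d, ((d.choose i : ℝ)) * ((j:ℝ)^i)) from hΔ]
    rw [fdiff_neg, fdiff_sum]
    have hterm : ∀ i ∈ Finset.range d,
        (d.choose i : ℝ) * fdiff m (fun j => (j:ℝ)^i) k
        = if i = m then (d.choose i : ℝ) * ((-1:ℝ)^m * (m.factorial : ℝ)) else 0 := by
      intro i hi
      have hi' : i ≤ m := by
        have := Finset.mem_range.mp hi
        omega
      rw [ih i hi' k]
      split <;> simp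
    rw [Finset.sum_congr rfl hterm]
    by_cases hdm : d = m + 1
    · subst hdm
      rw [Finset.sum_ite_eq' (Finset.range (m+1)) m
        (fun i => ((m+1).choose i : ℝ) * ((-1:ℝ)^m * (m.factorial : ℝ)))]
      simp [Nat.choose_succ_self_right]
      push_cast [Nat.factorial_succ]
      ring
    · have : ∀ i ∈ Finset.range d,
          (if i = m then (d.choose i : ℝ) * ((-1:ℝ)^m * (m.factorial : ℝ)) else 0) = 0 := by
        intro i hi
        have h1 : i < d := Finset.mem_range.mp hi
        have h2 : i ≠ m := by omega
        simp [h2]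
      rw [Finset.sum_congr rfl this]
      simp [hdm]

lemma cesaro_zero (m : ℕ) (x : ℕ → ℝ) : cesaro m x 0 = 0 := by
  simp [cesaro]

lemma sum_Icc_telescope (a : ℕ → ℝ) (n : ℕ) :
    ∑ k ∈ Finset.Icc 1 n, (a k - a (k+1)) = a 1 - a (n+1) := by
  rw [show Finset.Icc 1 n = Finset.Ico 1 (n+1) from (Finset.Ico_add_one_right_eq_Icc 1 n).symm,
    Finset.sum_Ico_eq_sum_range]
  simp only [Nat.add_sub_cancel]
  have := Finset.sum_range_sub' (fun i => a (1 + i)) n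
  simpa [add_comm, add_assoc, add_left_comm] using this

theorem CinfG_pred_subset_strict (m : ℕ) (hm : 1 ≤ m) :
    (∀ x : ℕ → ℝ, memCinfG (m - 1) x → memCinfG m x) ∧
    memCinfG m (fun k => Real.exp ((k : ℝ) ^ m)) ∧
    ¬ memCinfG (m - 1) (fun k => Real.exp ((k : ℝ) ^ m)) := by
  obtain ⟨M, rfl⟩ : ∃ M, m = M + 1 := ⟨m - 1, by omega⟩
  simp only [Nat.add_sub_cancel]
  set c : ℝ := (-1:ℝ)^(M+1) * ((M+1).factorial : ℝ) with hc
  have hcabs : |c| = ((M+1).factorial : ℝ) := by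
    rw [hc, abs_mul, abs_pow, abs_neg, abs_one, one_pow, one_mul,
      abs_of_nonneg (by positivity)]
  have hc1 : (1:ℝ) ≤ |c| := by
    rw [hcabs]
    exact_mod_cast Nat.one_le_iff_ne_zero.mpr (Nat.factorial_ne_zero _)
  -- the constant value of the (M+1)-st difference of k^(M+1)
  have hfd : ∀ k, fdiff (M+1) (fun j => (j:ℝ)^(M+1)) k = c := by
    intro k
    rw [fdiff_pow (M+1) (M+1) le_rfl k, if_pos rfl]
  refine ⟨?_, ?_, ?_⟩
  · -- inclusion
    rintro x ⟨hpos, C, hC⟩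
    refine ⟨hpos, |fdiff M (fun j => Real.log (x j)) 1| + 3 * C, ?_⟩
    set y : ℕ → ℝ := fun j => Real.log (x j) with hy
    set a : ℕ → ℝ := fun k => fdiff M y k with ha
    have hC0 : 0 ≤ C := le_trans (abs_nonneg _) (hC 0)
    have hA : ∀ n : ℕ, |∑ k ∈ Finset.Icc 1 n, a k| ≤ C * n := by
      intro n
      rcases Nat.eq_zero_or_pos n with h0 | h1
      · subst h0; simp
      · have hn : (0:ℝ) < n := by exact_mod_cast h1
        have := hC n
        rw [cesaro] at this
        have heq : (∑ k ∈ Finset.Icc 1 n, a k)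
            = (n:ℝ) * ((1 / (n:ℝ)) * ∑ k ∈ Finset.Icc 1 n, a k) := by
          field_simp
        rw [heq, abs_mul, abs_of_pos hn]
        calc (n:ℝ) * |(1 / (n:ℝ)) * ∑ k ∈ Finset.Icc 1 n, a k|
            ≤ (n:ℝ) * C := by
              apply mul_le_mul_of_nonneg_left _ (le_of_lt hn)
              exact this
          _ = C * n := by ring
    intro n
    rcases Nat.eq_zero_or_pos n with h0 | h1
    · subst h0
      rw [cesaro_zero]
      simp
      positivity
    · have hn : (1:ℝ) ≤ (n:ℝ) := by exact_mod_cast h1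
      have hn0 : (0:ℝ) < n := by linarith
      rw [cesaro]
      have hsum : (∑ k ∈ Finset.Icc 1 n, fdiff (M+1) y k) = a 1 - a (n+1) := by
        have : ∀ k ∈ Finset.Icc 1 n, fdiff (M+1) y k = a k - a (k+1) := by
          intro k _
          exact fdiff_succ M y k
        rw [Finset.sum_congr rfl this, sum_Icc_telescope]
      rw [hsum]
      have han1 : |a (n+1)| ≤ C * (n+1) + C * n := by
        have hsplit : (∑ k ∈ Finset.Icc 1 (n+1), a k)
            = (∑ k ∈ Finset.Icc 1 n, a k) + a (n+1) :=
          Finset.sum_Icc_succ_top (by omega) a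
        have h1' := hA (n+1)
        have h2' := hA n
        have : a (n+1) = (∑ k ∈ Finset.Icc 1 (n+1), a k) - (∑ k ∈ Finset.Icc 1 n, a k) := by
          rw [hsplit]; ring
        rw [this]
        calc |(∑ k ∈ Finset.Icc 1 (n+1), a k) - (∑ k ∈ Finset.Icc 1 n, a k)|
            ≤ |∑ k ∈ Finset.Icc 1 (n+1), a k| + |∑ k ∈ Finset.Icc 1 n, a k| := abs_sub _ _
          _ ≤ C * (n+1) + C * n := by
              push_cast at h1' ⊢
              linarith
      rw [abs_mul, abs_of_pos (by positivity : (0:ℝ) < 1 / (n:ℝ))]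
      have htri : |a 1 - a (n+1)| ≤ |a 1| + (C * (n+1) + C * n) :=
        le_trans (abs_sub _ _) (by linarith [han1])
      calc (1 / (n:ℝ)) * |a 1 - a (n+1)|
          ≤ (1 / (n:ℝ)) * (|a 1| + (C * (n+1) + C * n)) := by
            apply mul_le_mul_of_nonneg_left htri (by positivity)
        _ ≤ |a 1| + 3 * C := by
            rw [div_mul_eq_mul_div, div_le_iff₀ hn0]
            nlinarith [abs_nonneg (a 1)]
  · -- x_k = exp(k^(M+1)) is in C_∞^G(Δ^(M+1))
    refine ⟨fun k _ => Real.exp_pos _, ((M+1).factorial : ℝ), fun n => ?_⟩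
    have : cesaro (M+1) (fun k => Real.exp ((k:ℝ)^(M+1))) n
        = (1 / (n:ℝ)) * ((n:ℝ) * c) := by
      rw [cesaro]
      simp only [Real.log_exp]
      rw [Finset.sum_congr rfl (fun k _ => hfd k), Finset.sum_const, Nat.card_Icc]
      simp [Nat.add_sub_cancel]
    rw [this]
    rcases Nat.eq_zero_or_pos n with h0 | h1
    · subst h0; simp
    · have hn0 : (0:ℝ) < n := by exact_mod_cast h1
      rw [show (1 / (n:ℝ)) * ((n:ℝ) * c) = c by field_simp]
      rw [← hcabs]
  · -- not in C_∞^G(Δ^M)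
    rintro ⟨-, C, hC⟩
    set y : ℕ → ℝ := fun j => Real.log (Real.exp ((j:ℝ)^(M+1))) with hy
    have hylog : y = fun j : ℕ => (j:ℝ)^(M+1) := by
      funext j; simp [hy]
    set a : ℕ → ℝ := fun k => fdiff M y k with ha
    have hstep : ∀ k, a (k+1) = a k - c := by
      intro k
      have := fdiff_succ M y k
      have h2 : fdiff (M+1) y k = c := by
        rw [hylog]; exact hfd k
      rw [h2] at this
      linarith [this]
    have haff : ∀ k : ℕ, a k = a 0 - k * c := by
      intro k
      induction k with
      | zero => simp
      | succ k ihk => rw [hstep k, ihk]; push_cast; ring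
    have hC0 : 0 ≤ C := le_trans (abs_nonneg _) (hC 0)
    obtain ⟨n, hn⟩ := exists_nat_gt (2 * (C + |a 0|) + 1)
    have hn1 : 1 ≤ n := by
      by_contra h
      push_neg at h
      interval_cases n
      simp at hn
      nlinarith [abs_nonneg (a 0)]
    have hnR : (1:ℝ) ≤ n := by exact_mod_cast hn1
    have hn0 : (0:ℝ) < n := by linarith
    -- Gauss sum
    have hS : (∑ k ∈ Finset.Icc 1 n, (k:ℝ)) * 2 = (n:ℝ) * ((n:ℝ)+1) := by
      have h1 : (∑ k ∈ Finset.Icc 1 n, k) = ∑ i ∈ Finset.range (n+1), i := by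
        rw [Finset.sum_range_succ' (fun i => i) n,
          show Finset.Icc 1 n = Finset.Ico 1 (n+1) from (Finset.Ico_add_one_right_eq_Icc 1 n).symm,
          Finset.sum_Ico_eq_sum_range]
        simp [add_comm]
      have h2 := Finset.sum_range_id_mul_two (n+1)
      have : (∑ k ∈ Finset.Icc 1 n, k) * 2 = (n+1) * n := by
        rw [h1, h2]; simp
      calc (∑ k ∈ Finset.Icc 1 n, (k:ℝ)) * 2
          = (((∑ k ∈ Finset.Icc 1 n, k) * 2 : ℕ) : ℝ) := by push_cast; ring
        _ = (n:ℝ) * ((n:ℝ)+1) := by rw [this]; push_cast; ring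
    set S : ℝ := ∑ k ∈ Finset.Icc 1 n, (k:ℝ) with hSdef
    have hSnonneg : 0 ≤ S := Finset.sum_nonneg (fun k _ => by positivity)
    -- value of the Cesàro sum
    have hsum : (∑ k ∈ Finset.Icc 1 n, a k) = (n:ℝ) * a 0 - c * S := by
      rw [Finset.sum_congr rfl (fun k (_ : k ∈ Finset.Icc 1 n) => haff k)]
      rw [Finset.sum_sub_distrib, Finset.sum_const, Nat.card_Icc]
      simp only [Nat.add_sub_cancel, nsmul_eq_mul]
      congr 1
      rw [hSdef, Finset.mul_sum]
      exact Finset.sum_congr rfl (fun k _ => by ring)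
    have hcesn : (n:ℝ) * cesaro M (fun k => Real.exp ((k:ℝ)^(M+1))) n
        = (n:ℝ) * a 0 - c * S := by
      rw [cesaro, ← hsum]
      have : (fun j : ℕ => Real.log (Real.exp ((j:ℝ)^(M+1)))) = y := rfl
      rw [this]
      field_simp
      rfl
    have hCn := hC n
    have hub : (n:ℝ) * |cesaro M (fun k => Real.exp ((k:ℝ)^(M+1))) n| ≤ (n:ℝ) * C :=
      mul_le_mul_of_nonneg_left hCn (le_of_lt hn0)
    have hlb : |c| * S - (n:ℝ) * |a 0|
        ≤ (n:ℝ) * |cesaro M (fun k => Real.exp ((k:ℝ)^(M+1))) n| := by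
      have : (n:ℝ) * |cesaro M (fun k => Real.exp ((k:ℝ)^(M+1))) n|
          = |(n:ℝ) * cesaro M (fun k => Real.exp ((k:ℝ)^(M+1))) n| := by
        rw [abs_mul, abs_of_pos hn0]
      rw [this, hcesn]
      have e1 : |c * S| = |c| * S := by rw [abs_mul, abs_of_nonneg hSnonneg]
      have e2 : |(n:ℝ) * a 0| = (n:ℝ) * |a 0| := by rw [abs_mul, abs_of_pos hn0]
      have h1 := abs_sub_abs_le_abs_sub (c * S) ((n:ℝ) * a 0)
      have h2 : |c * S - (n:ℝ) * a 0| = |(n:ℝ) * a 0 - c * S| := abs_sub_comm _ _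
      linarith [e1.le, e1.ge, e2.le, e2.ge, h2.le, h2.ge]
    have hSlb : (n:ℝ) * (n:ℝ) ≤ S * 2 := by
      rw [hS]; nlinarith
    nlinarith [mul_le_mul_of_nonneg_left hc1 hSnonneg]
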